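/- If I = (x_{i_1}^{a_1},...,x_{i_r}^{a_r}) is a monomial ideal generated by pure powers of distinct variables, then its polarization has the decomposition P(I) = ∩ (x_{i_1,c_1},...,x_{i_r,c_r}), where the intersection is over all tuples (c_1,...,c_r) with 1 ≤ c_j ≤ a_j for each j. -/
import Mathlib


open MvPolynomial

/-- The monomial `x_1^{a_1} ⋯ x_n^{a_n}` with exponent vector `a`. -/
noncomputable def mon (k : Type) [Field k] {n : ℕ} (a : Fin n → ℕ) :
    MvPolynomial (Fin n) k :=
  ∏ i, X i ^ a i

/-- The polarization of the monomial with exponent vector `a`: the square-free monomial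
`∏_i ∏_{j < a_i} x_{i,j}` in the doubly-indexed variables `x_{i,j}`, `0 ≤ j ≤ m`. -/
noncomputable def polar (k : Type) [Field k] (m : ℕ) {n : ℕ} (a : Fin n → ℕ) :
    MvPolynomial (Fin n × Fin (m + 1)) k :=
  ∏ i, ∏ j ∈ Finset.univ.filter fun j : Fin (m + 1) => (j : ℕ) < a i, X (i, j)

/-- for `I = (x_{i₁}^{a₁},…,x_{i_r}^{a_r})` with distinct variables,
`𝒫(I) = ⋂_{1 ≤ c_j ≤ a_j} (x_{i₁,c₁},…,x_{i_r,c_r})` (indices `c` taken 0-based). -/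
theorem polar_pure_powers_decomposition (k : Type) [Field k] (m n r : ℕ)
    (ι : Fin r → Fin n) (hι : Function.Injective ι)
    (a : Fin r → ℕ) (hpos : ∀ j, 0 < a j) (hbd : ∀ j, a j ≤ m + 1) :
    Ideal.span (Set.range fun j =>
        ∏ c ∈ Finset.univ.filter fun c : Fin (m + 1) => (c : ℕ) < a j,
          (X (ι j, c) : MvPolynomial (Fin n × Fin (m + 1)) k)) =
      ⨅ c ∈ {c : Fin r → Fin (m + 1) | ∀ j, (c j : ℕ) < a j},
        Ideal.span (Set.range fun j =>
          (X (ι j, c j) : MvPolynomial (Fin n × Fin (m + 1)) k)) := by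
  classical
  set F : Fin r → Finset (Fin (m + 1)) :=
    fun j => Finset.univ.filter fun c : Fin (m + 1) => (c : ℕ) < a j with hF
  set s : Fin r → (Fin n × Fin (m + 1)) →₀ ℕ :=
    fun j => ∑ c ∈ F j, Finsupp.single (ι j, c) 1 with hs
  -- value of s j at a point
  have hsval : ∀ j (v : Fin n × Fin (m + 1)),
      (s j) v = if v.1 = ι j ∧ (v.2 : ℕ) < a j then 1 else 0 := by
    intro j v
    rw [hs]
    simp only [Finsupp.finset_sum_apply, Finsupp.single_apply]
    rcases v with ⟨v1, v2⟩
    by_cases h1 : v1 = ι j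
    · subst h1
      by_cases h2 : (v2 : ℕ) < a j
      · rw [if_pos ⟨rfl, h2⟩]
        simp only [Prod.mk.injEq, true_and]
        rw [Finset.sum_ite_eq']
        simp [hF, h2]
      · rw [if_neg (by simp [h2])]
        apply Finset.sum_eq_zero
        intro c hc
        simp only [hF, Finset.mem_filter] at hc
        rw [if_neg]
        rintro ⟨rfl⟩
        exact h2 hc.2
    · rw [if_neg (by simp [h1])]
      apply Finset.sum_eq_zero
      intro c hc
      rw [if_neg]
      rintro ⟨rfl⟩
      exact h1 rfl
  have hsle : ∀ j (d : (Fin n × Fin (m + 1)) →₀ ℕ),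
      s j ≤ d ↔ ∀ c : Fin (m + 1), (c : ℕ) < a j → d (ι j, c) ≠ 0 := by
    intro j d
    rw [Finsupp.le_def]
    constructor
    · intro h c hc
      have := h (ι j, c)
      rw [hsval] at this
      simp only [hc, and_self, if_pos] at this
      omega
    · intro h v
      rw [hsval]
      rcases v with ⟨v1, v2⟩
      split_ifs with hv
      · obtain ⟨h1, h2⟩ := hv
        have := h v2 h2
        subst h1
        omega
      · exact Nat.zero_le _
  -- rewrite the LHS generators as monomials
  have hgen : (Set.range fun j =>
      ∏ c ∈ Finset.univ.filter fun c : Fin (m + 1) => (c : ℕ) < a j,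
        (X (ι j, c) : MvPolynomial (Fin n × Fin (m + 1)) k))
      = (fun t => monomial t (1 : k)) '' Set.range s := by
    rw [← Set.range_comp]
    refine congrArg Set.range (funext fun j => ?_)
    simp only [Function.comp_apply, hs, monomial_sum_one]
    refine Finset.prod_congr rfl fun c _ => ?_
    rw [← X_pow_eq_monomial, pow_one]
  ext p
  rw [hgen, mem_ideal_span_monomial_image]
  simp only [Ideal.mem_iInf, Set.mem_setOf_eq]
  constructor
  · intro h c hc
    have : (Set.range fun j => (X (ι j, c j) : MvPolynomial (Fin n × Fin (m + 1)) k))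
        = MvPolynomial.X '' Set.range (fun j : Fin r => (ι j, c j)) := by
      rw [← Set.range_comp]; rfl
    rw [this, mem_ideal_span_X_image]
    intro d hd
    obtain ⟨si, hsi, hle⟩ := h d hd
    obtain ⟨j, rfl⟩ := hsi
    exact ⟨(ι j, c j), ⟨j, rfl⟩, (hsle j d).mp hle (c j) (hc j)⟩
  · intro h d hd
    by_contra hcon
    push_neg at hcon
    have hcon' : ∀ j : Fin r, ∃ c : Fin (m + 1), (c : ℕ) < a j ∧ d (ι j, c) = 0 := by
      intro j
      have := hcon (s j) ⟨j, rfl⟩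
      rw [hsle j d] at this
      push_neg at this
      exact this
    choose c hc1 hc2 using hcon'
    have hmem := h c hc1
    have : (Set.range fun j => (X (ι j, c j) : MvPolynomial (Fin n × Fin (m + 1)) k))
        = MvPolynomial.X '' Set.range (fun j : Fin r => (ι j, c j)) := by
      rw [← Set.range_comp]; rfl
    rw [this, mem_ideal_span_X_image] at hmem
    obtain ⟨v, ⟨j, rfl⟩, hv⟩ := hmem d hd
    exact hv (hc2 j)
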